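/- Let K be a convex body in ℝ^n and let γ = (q_1, …, q_m) be a closed polygon with q_{i+1} ≠ q_i for all i and with u_{i−1} ≠ u_i for all i, where u_i := (q_{i+1} − q_i)/‖q_{i+1} − q_i‖. Suppose γ ∈ 𝒫⁺(K) and len(γ) ≤ len(γ') for every closed polygon γ' ∈ 𝒫⁺(K). Then there exists x ∈ ℝ^n such that the translated polygon (q_i + x)_{i=1}^m is a periodic billiard trajectory on K. -/

import Mathlib

open scoped RealInnerProductSpace Pointwise
open Metric

noncomputable section

/-- Euclidean space ℝ^n. -/
abbrev Euc (n : ℕ) := EuclideanSpace ℝ (Fin n)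

/-- The image of a closed polygon with vertices `q 0, …, q (m-1)` (indices mod `m`):
the union of the segments `[q i, q (i+1)]`. -/
def polyImage {n m : ℕ} [NeZero m] (q : Fin m → Euc n) : Set (Euc n) :=
  ⋃ i : Fin m, segment ℝ (q i) (q (i + 1))

/-- The length of a closed polygon: `∑ i, ‖q (i+1) - q i‖`. -/
noncomputable def polyLength {n m : ℕ} [NeZero m] (q : Fin m → Euc n) : ℝ :=
  ∑ i : Fin m, ‖q (i + 1) - q i‖

/-- A convex body: a compact convex set with nonempty interior. -/
def IsConvexBody {n : ℕ} (K : Set (Euc n)) : Prop :=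
  IsCompact K ∧ Convex ℝ K ∧ (interior K).Nonempty

/-- A closed polygon belongs to `𝒫⁺(K)` if no translate of its image is contained
in the interior of `K`. -/
def InPPlus {n m : ℕ} [NeZero m] (K : Set (Euc n)) (q : Fin m → Euc n) : Prop :=
  ∀ x : Euc n, ¬ ((fun p => p + x) '' polyImage q ⊆ interior K)

/-- Unit direction of the `i`-th edge of a closed polygon. -/
noncomputable def dir {n m : ℕ} [NeZero m] (q : Fin m → Euc n) (i : Fin m) : Euc n :=
  ‖q (i + 1) - q i‖⁻¹ • (q (i + 1) - q i)

/-- Outer normal `ν i = u (i-1) - u i` at the `i`-th vertex. -/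
noncomputable def normalVec {n m : ℕ} [NeZero m] (q : Fin m → Euc n) (i : Fin m) : Euc n :=
  dir q (i - 1) - dir q i

/-- A periodic billiard trajectory on a convex body `K`. -/
def IsBilliard {n m : ℕ} [NeZero m] (K : Set (Euc n)) (q : Fin m → Euc n) : Prop :=
  2 ≤ m ∧ (∀ i, q (i + 1) ≠ q i) ∧ (∀ i, q i ∈ K) ∧
    ∀ i, normalVec q i ≠ 0 ∧ ∀ x ∈ K, ⟪x - q i, normalVec q i⟫ ≤ 0

lemma vertex_mem_polyImage {n m : ℕ} [NeZero m] (q : Fin m → Euc n) (i : Fin m) :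
    q i ∈ polyImage q :=
  Set.mem_iUnion.2 ⟨i, left_mem_segment ℝ _ _⟩

lemma polyImage_subset_of_vertices {n m : ℕ} [NeZero m] {s : Set (Euc n)}
    (hs : Convex ℝ s) {q : Fin m → Euc n} {x : Euc n}
    (h : ∀ i, q i + x ∈ s) : (fun p => p + x) '' polyImage q ⊆ s := by
  rintro _ ⟨p, hp, rfl⟩
  rcases Set.mem_iUnion.1 hp with ⟨i, α, β, hα, hβ, hab, rfl⟩
  show (α • q i + β • q (i + 1)) + x ∈ s
  have he : α • (q i + x) + β • (q (i + 1) + x)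
      = (α • q i + β • q (i + 1)) + (α + β) • x := by
    simp only [smul_add, add_smul]; abel
  have he2 : (α • q i + β • q (i + 1)) + x = α • (q i + x) + β • (q (i + 1) + x) := by
    rw [he, hab, one_smul]
  rw [he2]
  exact hs (h i) (h (i + 1)) hα hβ hab

lemma norm_add_smul_le' {n : ℕ} (a c : Euc n) (t : ℝ) (ha : a ≠ 0) :
    ‖a + t • c‖ ≤ ‖a‖ + t * ⟪a, c⟫ / ‖a‖ + t ^ 2 * (‖c‖ ^ 2 / (2 * ‖a‖)) := by
  have hA : 0 < ‖a‖ := norm_pos_iff.2 ha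
  have h1 : ‖a + t • c‖ ^ 2 = ‖a‖ ^ 2 + 2 * (t * ⟪a, c⟫) + t ^ 2 * ‖c‖ ^ 2 := by
    rw [norm_add_sq_real, real_inner_smul_right, norm_smul, mul_pow]
    simp [sq_abs]
  have h2 : ‖a‖ + t * ⟪a, c⟫ / ‖a‖ + t ^ 2 * (‖c‖ ^ 2 / (2 * ‖a‖))
      = ‖a‖ + (2 * (t * ⟪a, c⟫) + t ^ 2 * ‖c‖ ^ 2) / (2 * ‖a‖) := by
    field_simp; ring
  rw [h2, ← sub_le_iff_le_add', le_div_iff₀ (by positivity)]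
  nlinarith [sq_nonneg (‖a + t • c‖ - ‖a‖)]

theorem stmt6 {n m : ℕ} [NeZero m] (K : Set (Euc n)) (hK : IsConvexBody K)
    (q : Fin m → Euc n)
    (hne : ∀ i, q (i + 1) ≠ q i)
    (hu : ∀ i, dir q (i - 1) ≠ dir q i)
    (hP : InPPlus K q)
    (hmin : ∀ (m' : ℕ) [NeZero m'] (q' : Fin m' → Euc n),
      InPPlus K q' → polyLength q ≤ polyLength q') :
    ∃ x : Euc n, IsBilliard K (fun i => q i + x) := by
  classical
  obtain ⟨hKcomp, hKconv, hKint⟩ := hK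
  have hKcl : IsClosed K := hKcomp.isClosed
  have hKne : K.Nonempty := hKint.mono interior_subset
  have ha : ∀ i, q (i + 1) - q i ≠ 0 := fun i => sub_ne_zero.2 (hne i)
  have han : ∀ i, (0:ℝ) < ‖q (i + 1) - q i‖ := fun i => norm_pos_iff.2 (ha i)
  have hL0 : 0 < polyLength q :=
    Finset.sum_pos' (fun i _ => norm_nonneg _) ⟨0, Finset.mem_univ _, han 0⟩
  have hPvert : ∀ x : Euc n, ∃ i, q i + x ∉ interior K := by
    intro x
    by_contra hcon
    push_neg at hcon
    exact hP x (polyImage_subset_of_vertices hKconv.interior hcon)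
  have hm2 : 2 ≤ m := by
    rcases m with _ | _ | m
    · exact absurd rfl (NeZero.ne 0)
    · exact absurd (congrArg (dir q) (show (0 : Fin 1) - 1 = 0 from rfl)) (hu 0)
    · omega
  have hinner_au : ∀ i, ⟪q (i + 1) - q i, dir q i⟫ = ‖q (i + 1) - q i‖ := by
    intro i
    rw [dir, real_inner_smul_right, real_inner_self_eq_norm_sq, pow_two,
      inv_mul_cancel_left₀ (han i).ne']
  have hsum_qx : ∀ x : Euc n, ∑ i, ⟪q i + x, normalVec q i⟫ = polyLength q := by
    intro x
    have h2 : ∑ i, ⟪q i + x, dir q (i - 1)⟫ = ∑ i, ⟪q (i + 1) + x, dir q i⟫ :=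
      Fintype.sum_equiv (Equiv.subRight 1) _ _ (fun i => by
        show ⟪q i + x, dir q (i - 1)⟫ = ⟪q (i - 1 + 1) + x, dir q (i - 1)⟫
        rw [sub_add_cancel])
    calc ∑ i, ⟪q i + x, normalVec q i⟫
        = ∑ i, (⟪q i + x, dir q (i - 1)⟫ - ⟪q i + x, dir q i⟫) := by
          simp only [normalVec, inner_sub_right]
      _ = ∑ i, ⟪q i + x, dir q (i - 1)⟫ - ∑ i, ⟪q i + x, dir q i⟫ :=
          Finset.sum_sub_distrib _ _
      _ = ∑ i, ⟪q (i + 1) + x, dir q i⟫ - ∑ i, ⟪q i + x, dir q i⟫ := by rw [h2]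
      _ = ∑ i, ⟪q (i + 1) - q i, dir q i⟫ := by
          rw [← Finset.sum_sub_distrib]
          refine Finset.sum_congr rfl (fun i _ => ?_)
          rw [← inner_sub_left]
          congr 1
          abel
      _ = polyLength q := Finset.sum_congr rfl (fun i _ => hinner_au i)
  -- support points
  have hsupp : ∀ i : Fin m, ∃ z, z ∈ K ∧ ∀ y ∈ K,
      ⟪y, normalVec q i⟫ ≤ ⟪z, normalVec q i⟫ := by
    intro i
    obtain ⟨z, hzK, hmax⟩ := hKcomp.exists_isMaxOn hKne
      ((Continuous.inner continuous_id continuous_const :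
        Continuous fun y : Euc n => ⟪y, normalVec q i⟫).continuousOn)
    exact ⟨z, hzK, fun y hy => hmax hy⟩
  choose p hpK hpmax using hsupp
  -- STEP A
  have hxE : ∃ x₀ : Euc n, ∀ i, q i + x₀ ∈ K := by
    have hscale : ∀ k : ℕ, ∃ x : Euc n, ∀ i, (1 - ((k:ℝ) + 1)⁻¹) • q i + x ∈ K := by
      intro k
      have hk1 : (0:ℝ) < (k:ℝ) + 1 := by positivity
      have hinv1 : ((k:ℝ) + 1)⁻¹ ≤ 1 := by
        rw [inv_le_one₀ hk1]
        have : (0:ℝ) ≤ (k:ℝ) := Nat.cast_nonneg k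
        linarith
      have hinv0 : (0:ℝ) < ((k:ℝ) + 1)⁻¹ := by positivity
      have hl0 : (0:ℝ) ≤ 1 - ((k:ℝ) + 1)⁻¹ := by linarith
      have hlen : polyLength (fun i => (1 - ((k:ℝ) + 1)⁻¹) • q i)
          = (1 - ((k:ℝ) + 1)⁻¹) * polyLength q := by
        unfold polyLength
        rw [Finset.mul_sum]
        refine Finset.sum_congr rfl (fun i _ => ?_)
        rw [← smul_sub, norm_smul, Real.norm_eq_abs, abs_of_nonneg hl0]
      have hnotP : ¬ InPPlus K (fun i => (1 - ((k:ℝ) + 1)⁻¹) • q i) := by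
        intro hin
        have hmge := hmin m (fun i => (1 - ((k:ℝ) + 1)⁻¹) • q i) hin
        rw [hlen] at hmge
        nlinarith
      unfold InPPlus at hnotP
      push_neg at hnotP
      obtain ⟨x, hx⟩ := hnotP
      exact ⟨x, fun i => interior_subset
        (hx (Set.mem_image_of_mem _ (vertex_mem_polyImage _ i)))⟩
    choose xs hxs using hscale
    have hyK : ∀ k : ℕ, (1 - ((k:ℝ) + 1)⁻¹) • q 0 + xs k ∈ K := fun k => hxs k 0
    obtain ⟨ylim, hylimK, φ, hφ, hconv⟩ := hKcomp.tendsto_subseq hyK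
    have hltend : Filter.Tendsto (fun k : ℕ => 1 - ((k:ℝ) + 1)⁻¹) Filter.atTop (nhds 1) := by
      have h0 : Filter.Tendsto (fun k : ℕ => ((k:ℝ) + 1)⁻¹) Filter.atTop (nhds 0) := by
        simpa [one_div] using (tendsto_one_div_add_atTop_nhds_zero_nat :
          Filter.Tendsto (fun n : ℕ => 1 / ((n : ℝ) + 1)) Filter.atTop (nhds 0))
      simpa using tendsto_const_nhds.sub h0
    have hlφ : Filter.Tendsto (fun k : ℕ => 1 - ((φ k : ℝ) + 1)⁻¹) Filter.atTop (nhds 1) :=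
      hltend.comp hφ.tendsto_atTop
    have hxstend : Filter.Tendsto (fun k => xs (φ k)) Filter.atTop (nhds (ylim - q 0)) := by
      have h1 : Filter.Tendsto (fun k => (1 - ((φ k : ℝ) + 1)⁻¹) • q 0) Filter.atTop
          (nhds ((1:ℝ) • q 0)) := hlφ.smul_const (q 0)
      have h2 : Filter.Tendsto
          (fun k => ((1 - ((φ k : ℝ) + 1)⁻¹) • q 0 + xs (φ k)) - (1 - ((φ k : ℝ) + 1)⁻¹) • q 0)
          Filter.atTop (nhds (ylim - (1:ℝ) • q 0)) := hconv.sub h1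
      simpa using h2
    refine ⟨ylim - q 0, fun i => ?_⟩
    have htend : Filter.Tendsto (fun k => (1 - ((φ k : ℝ) + 1)⁻¹) • q i + xs (φ k))
        Filter.atTop (nhds (q i + (ylim - q 0))) := by
      have h1 : Filter.Tendsto (fun k => (1 - ((φ k : ℝ) + 1)⁻¹) • q i) Filter.atTop
          (nhds ((1:ℝ) • q i)) := hlφ.smul_const (q i)
      simpa using h1.add hxstend
    exact hKcl.mem_of_tendsto htend (Filter.Eventually.of_forall (fun k => hxs (φ k) i))
  obtain ⟨x₀, hx₀⟩ := hxE
  -- deformed polygons stay in P⁺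
  have hPt : ∀ t : ℝ, 0 < t → InPPlus K (fun i => (1 + t) • q i - t • p i) := by
    intro t ht x hsub
    have h1t : (0:ℝ) < 1 + t := by linarith
    have hvint : ∀ i, (((1 + t) • q i - t • p i) + x) ∈ interior K := fun i =>
      hsub (Set.mem_image_of_mem _ (vertex_mem_polyImage _ i))
    obtain ⟨i, hi⟩ := hPvert ((1 + t)⁻¹ • x)
    apply hi
    have hcombo := hKconv.combo_interior_closure_mem_interior (hvint i)
        (subset_closure (hpK i)) (a := (1 + t)⁻¹) (b := t / (1 + t))
        (by positivity) (by positivity) (by field_simp)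
    have heq : (1 + t)⁻¹ • (((1 + t) • q i - t • p i) + x) + (t / (1 + t)) • p i
        = q i + (1 + t)⁻¹ • x := by
      rw [smul_add, smul_sub, smul_smul, smul_smul, inv_mul_cancel₀ h1t.ne', one_smul,
        div_eq_inv_mul, ← smul_smul]
      abel
    rwa [heq] at hcombo
  -- D ≥ 0
  set c : Fin m → Euc n := fun i => (q (i + 1) - q i) - (p (i + 1) - p i) with hc
  set D : ℝ := ∑ i, ⟪q (i + 1) - q i, c i⟫ / ‖q (i + 1) - q i‖ with hD
  set C : ℝ := ∑ i, ‖c i‖ ^ 2 / (2 * ‖q (i + 1) - q i‖) with hCdef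
  have hC0 : 0 ≤ C := Finset.sum_nonneg (fun i _ => by positivity)
  have hedge : ∀ (t : ℝ) (i : Fin m),
      ((1 + t) • q (i + 1) - t • p (i + 1)) - ((1 + t) • q i - t • p i)
      = (q (i + 1) - q i) + t • c i := by
    intro t i
    simp only [hc, add_smul, one_smul, smul_sub]
    abel
  have hlenle : ∀ t : ℝ, polyLength (fun i => (1 + t) • q i - t • p i)
      ≤ polyLength q + t * D + t ^ 2 * C := by
    intro t
    unfold polyLength
    rw [hD, hCdef, Finset.mul_sum, Finset.mul_sum, ← Finset.sum_add_distrib,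
      ← Finset.sum_add_distrib]
    refine Finset.sum_le_sum (fun i _ => ?_)
    have hni := norm_add_smul_le' (q (i + 1) - q i) (c i) t (ha i)
    calc ‖((1 + t) • q (i + 1) - t • p (i + 1)) - ((1 + t) • q i - t • p i)‖
        = ‖(q (i + 1) - q i) + t • c i‖ := by rw [hedge t i]
      _ ≤ ‖q (i + 1) - q i‖ + t * ⟪q (i + 1) - q i, c i⟫ / ‖q (i + 1) - q i‖
          + t ^ 2 * (‖c i‖ ^ 2 / (2 * ‖q (i + 1) - q i‖)) := hni
      _ = ‖q (i + 1) - q i‖ + t * (⟪q (i + 1) - q i, c i⟫ / ‖q (i + 1) - q i‖)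
          + t ^ 2 * (‖c i‖ ^ 2 / (2 * ‖q (i + 1) - q i‖)) := by ring
  have hD0 : 0 ≤ D := by
    by_contra hDneg
    push_neg at hDneg
    set t : ℝ := -D / (2 * C + 1) with htdef
    have ht0 : 0 < t := div_pos (by linarith) (by linarith)
    have hmge := hmin m _ (hPt t ht0)
    have hle2 := hlenle t
    have hkey : 0 ≤ t * D + t ^ 2 * C := by linarith
    have ht' : t * (2 * C + 1) = -D := by
      rw [htdef]; field_simp
    nlinarith [mul_pos ht0 ht0, sq_nonneg t]
  -- identify D
  have hDeq : D = polyLength q - ∑ i, ⟪p i, normalVec q i⟫ := by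
    have hterm : ∀ i, ⟪q (i + 1) - q i, c i⟫ / ‖q (i + 1) - q i‖
        = ‖q (i + 1) - q i‖ - ⟪dir q i, p (i + 1)⟫ + ⟪dir q i, p i⟫ := by
      intro i
      have h3 : ⟪q (i + 1) - q i, c i⟫ / ‖q (i + 1) - q i‖ = ⟪dir q i, c i⟫ := by
        rw [dir, real_inner_smul_left, div_eq_inv_mul]
      have h4 : ⟪dir q i, q (i + 1) - q i⟫ = ‖q (i + 1) - q i‖ :=
        (real_inner_comm _ _).trans (hinner_au i)
      rw [inner_sub_right] at h4
      rw [h3, hc]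
      simp only [inner_sub_right]
      linarith
    have hshift : ∑ i, ⟪dir q i, p (i + 1)⟫ = ∑ i, ⟪dir q (i - 1), p i⟫ :=
      Fintype.sum_equiv (Equiv.addRight 1) _ _ (fun i => by
        show ⟪dir q i, p (i + 1)⟫ = ⟪dir q (i + 1 - 1), p (i + 1)⟫
        rw [add_sub_cancel_right])
    rw [hD]
    calc ∑ i, ⟪q (i + 1) - q i, c i⟫ / ‖q (i + 1) - q i‖
        = ∑ i, (‖q (i + 1) - q i‖ - ⟪dir q i, p (i + 1)⟫ + ⟪dir q i, p i⟫) :=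
          Finset.sum_congr rfl (fun i _ => hterm i)
      _ = (∑ i, ‖q (i + 1) - q i‖)
          - ((∑ i, ⟪dir q i, p (i + 1)⟫) - ∑ i, ⟪dir q i, p i⟫) := by
          rw [Finset.sum_add_distrib, Finset.sum_sub_distrib]
          ring
      _ = polyLength q - ∑ i, ⟪p i, normalVec q i⟫ := by
          rw [hshift, ← Finset.sum_sub_distrib]
          congr 1
          refine Finset.sum_congr rfl (fun i _ => ?_)
          rw [normalVec, inner_sub_right, real_inner_comm (p i) (dir q (i - 1)),
            real_inner_comm (p i) (dir q i)]
  -- equality of the two sums, hence termwise equality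
  have hge : ∑ i, ⟪p i, normalVec q i⟫ ≤ polyLength q := by linarith
  have hle : ∀ i ∈ Finset.univ, ⟪q i + x₀, normalVec q i⟫ ≤ ⟪p i, normalVec q i⟫ :=
    fun i _ => hpmax i _ (hx₀ i)
  have hsum_eq : ∑ i, ⟪q i + x₀, normalVec q i⟫ = ∑ i, ⟪p i, normalVec q i⟫ :=
    le_antisymm (Finset.sum_le_sum hle) (by rw [hsum_qx x₀]; exact hge)
  have heach := (Finset.sum_eq_sum_iff_of_le hle).1 hsum_eq
  -- conclusion
  have hnvt : ∀ i, normalVec (fun j => q j + x₀) i = normalVec q i := by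
    intro i
    have hdirt : ∀ j, dir (fun j => q j + x₀) j = dir q j := by
      intro j; simp only [dir, add_sub_add_right_eq_sub]
    simp only [normalVec, hdirt]
  refine ⟨x₀, hm2, fun i => ?_, fun i => hx₀ i, fun i => ⟨?_, ?_⟩⟩
  · simpa using hne i
  · rw [hnvt i]
    exact sub_ne_zero.2 (hu i)
  · intro y hy
    rw [hnvt i]
    have h1 := hpmax i y hy
    have h2 := heach i (Finset.mem_univ i)
    have h3 : ⟪y - (q i + x₀), normalVec q i⟫
        = ⟪y, normalVec q i⟫ - ⟪q i + x₀, normalVec q i⟫ := inner_sub_left _ _ _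
    simp only [h3]
    linarith
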